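/- Let d ≥ 1, q ≥ 1 and let ζ : ℝ^d → ℝ^q be twice continuously differentiable. Let x ∈ ℝ^d be a point at which the Gram matrix G(x) = g(x)^T g(x) is invertible. Then the following two vectors of ℝ^d coincide: Σ_{i=1}^d g'(x)(g(x) G(x)^{-1} g(x)^T e_i) G(x)^{-1} g(x)^T e_i = Σ_{i=1}^d g'(x)(e_i) G(x)^{-1} g(x)^T e_i. -/

import Mathlib

open Matrix

private lemma clm_eucl_sum {d : ℕ} (f : EuclideanSpace ℝ (Fin d) →L[ℝ] ℝ) (c : Fin d → ℝ) :
    f ((WithLp.equiv 2 (Fin d → ℝ)).symm c) = ∑ l, c l * f (EuclideanSpace.single l 1) := by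
  have h : (WithLp.equiv 2 (Fin d → ℝ)).symm c = ∑ l, c l • EuclideanSpace.single l 1 := by
    ext j
    rw [WithLp.ofLp_sum, Finset.sum_apply j Finset.univ
      (fun l => (c l • EuclideanSpace.single l 1 : EuclideanSpace ℝ (Fin d)).ofLp)]
    simp [EuclideanSpace.single_apply]
  rw [h, map_sum]
  simp

private lemma sum_swap_key {d q : ℕ} (F : Fin d → Fin q → ℝ) (P : Fin d → Fin d → ℝ)
    (N : Fin q → Fin d → ℝ) (hkey : ∀ l j, (∑ i, P l i * N j i) = N j l) :
    ∑ i, ∑ j, (∑ l, P l i * F l j) * N j i = ∑ i, ∑ j, F i j * N j i := by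
  have h1 : ∀ (i : Fin d) (j : Fin q),
      (∑ l, P l i * F l j) * N j i = ∑ l, P l i * N j i * F l j := by
    intro i j
    rw [Finset.sum_mul]
    exact Finset.sum_congr rfl fun l _ => by ring
  simp_rw [h1]
  rw [Finset.sum_comm]
  have h2 : ∀ j : Fin q, (∑ i, ∑ l, P l i * N j i * F l j)
      = ∑ l, (∑ i, P l i * N j i) * F l j := by
    intro j
    rw [Finset.sum_comm]
    simp_rw [Finset.sum_mul]
  simp_rw [h2, hkey]
  rw [Finset.sum_comm]
  exact Finset.sum_congr rfl fun i _ => Finset.sum_congr rfl fun j _ => mul_comm _ _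

theorem fixman_sum_identity (d q : ℕ) (hd : 1 ≤ d) (hq : 1 ≤ q)
    (ζ : EuclideanSpace ℝ (Fin d) → EuclideanSpace ℝ (Fin q))
    (hζ : ContDiff ℝ 2 ζ)
    (g : EuclideanSpace ℝ (Fin d) → Matrix (Fin d) (Fin q) ℝ)
    (hg : ∀ x i j, g x i j = fderiv ℝ ζ x (EuclideanSpace.single i 1) j)
    (g' : EuclideanSpace ℝ (Fin d) → EuclideanSpace ℝ (Fin d) →
      Matrix (Fin d) (Fin q) ℝ)
    (hg' : ∀ x v k j, g' x v k j = fderiv ℝ (fun y => g y k j) x v)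
    (x : EuclideanSpace ℝ (Fin d)) (hG : IsUnit ((g x)ᵀ * g x)) :
    ∑ i : Fin d,
      (g' x ((WithLp.equiv 2 (Fin d → ℝ)).symm
          ((g x).mulVec (((g x)ᵀ * g x)⁻¹.mulVec ((g x)ᵀ.mulVec (Pi.single i 1)))))).mulVec
        (((g x)ᵀ * g x)⁻¹.mulVec ((g x)ᵀ.mulVec (Pi.single i 1)))
      = ∑ i : Fin d,
        (g' x (EuclideanSpace.single i 1)).mulVec
          (((g x)ᵀ * g x)⁻¹.mulVec ((g x)ᵀ.mulVec (Pi.single i 1))) := by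
  set A := g x with hA
  set N : Matrix (Fin q) (Fin d) ℝ := (Aᵀ * A)⁻¹ * Aᵀ with hNdef
  set P : Matrix (Fin d) (Fin d) ℝ := A * N with hPdef
  -- key matrix identity
  have hdet : IsUnit (Aᵀ * A).det := (Matrix.isUnit_iff_isUnit_det _).mp hG
  have hT : ((Aᵀ * A)⁻¹)ᵀ = (Aᵀ * A)⁻¹ := by
    rw [Matrix.transpose_nonsing_inv, Matrix.transpose_mul, Matrix.transpose_transpose]
  have hmat : P * Nᵀ = Nᵀ := by
    rw [hPdef, hNdef, Matrix.transpose_mul, hT, Matrix.transpose_transpose]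
    calc A * ((Aᵀ * A)⁻¹ * Aᵀ) * (A * (Aᵀ * A)⁻¹)
        = A * ((Aᵀ * A)⁻¹ * (Aᵀ * A)) * (Aᵀ * A)⁻¹ := by simp only [Matrix.mul_assoc]
      _ = A * (Aᵀ * A)⁻¹ := by rw [Matrix.nonsing_inv_mul _ hdet, Matrix.mul_one]
  have hkey : ∀ (l : Fin d) (j : Fin q), (∑ i, P l i * N j i) = N j l := by
    intro l j
    have := congrFun (congrFun hmat l) j
    simpa [Matrix.mul_apply, Matrix.transpose_apply] using this
  -- rewrite the weight vectors
  have hw : ∀ i : Fin d,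
      (Aᵀ * A)⁻¹.mulVec (Aᵀ.mulVec (Pi.single i 1)) = fun j => N j i := by
    intro i
    rw [Matrix.mulVec_mulVec]
    funext j
    simp [Matrix.mulVec_single, hNdef]
  have hc : ∀ i : Fin d,
      A.mulVec ((Aᵀ * A)⁻¹.mulVec (Aᵀ.mulVec (Pi.single i 1))) = fun l => P l i := by
    intro i
    rw [Matrix.mulVec_mulVec, Matrix.mulVec_mulVec]
    funext l
    simp [Matrix.mulVec_single, hPdef, hNdef, Matrix.mul_assoc]
  funext m
  rw [Finset.sum_apply m Finset.univ, Finset.sum_apply m Finset.univ]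
  have expand : ∀ (M : Matrix (Fin d) (Fin q) ℝ) (v : Fin q → ℝ),
      M.mulVec v m = ∑ j, M m j * v j := by
    intro M v; rfl
  simp_rw [expand, hc, hw]
  have hlin : ∀ (i : Fin d) (j : Fin q),
      g' x ((WithLp.equiv 2 (Fin d → ℝ)).symm (fun l => P l i)) m j
        = ∑ l, P l i * g' x (EuclideanSpace.single l 1) m j := by
    intro i j
    rw [hg']
    rw [clm_eucl_sum (fderiv ℝ (fun y => g y m j) x) (fun l => P l i)]
    exact Finset.sum_congr rfl fun l _ => by rw [hg']
  simp_rw [hlin]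
  exact sum_swap_key (fun l j => g' x (EuclideanSpace.single l 1) m j)
    (fun l i => P l i) (fun j i => N j i) hkey
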